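/- (Lemma 4.) Let r, s ≥ 1 and let D = A^r B^s be the strategy with p_i = p_A for 1 ≤ i ≤ r and p_i = p_B for r+1 ≤ i ≤ r+s. Then R_D = 2 Q_1 S, where Q_1 = (1 − (−1)^r q_A^r)(1 − (−1)^s q_B^s) and S = (q_A − q_B)²(1 + (−1)^{r+s} q_A^r q_B^s) / ((r+s)(1+q_A)²(1+q_B)²(1 − (q_A^r q_B^s)²)). -/

import Mathlib

open Finset

/-- `p°` for a single arm with win probability `x` (Futurity parameter `J = 2`):
`p° = x (1-x)² / (1 - (1-x)²)`. -/
noncomputable def poArm (x : ℝ) : ℝ := x * (1 - x) ^ 2 / (1 - (1 - x) ^ 2)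

/-- `p°_D = (1/(r+s)) Σ_{k=1}^{r+s} (Σ_{j=1}^{r+s} p_j Π_{i=j+1}^{j+2k} q_i) / (1 − (q_A^r q_B^s)²)`. -/
noncomputable def pCircD (p : ℕ → ℝ) (r s : ℕ) (qA qB : ℝ) : ℝ :=
  (1 / ((r + s : ℕ) : ℝ)) *
    ∑ k ∈ Finset.Icc 1 (r + s),
      (∑ j ∈ Finset.Icc 1 (r + s),
          p j * ∏ i ∈ Finset.Icc (j + 1) (j + 2 * k), (1 - p i)) /
        (1 - (qA ^ r * qB ^ s) ^ 2)

/-- The casino's asymptotic profit per coup `R_D = 2(r p°_A + s p°_B)/(r+s) − 2 p°_D`. -/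
noncomputable def RD (p : ℕ → ℝ) (r s : ℕ) (pA pB : ℝ) : ℝ :=
  2 * ((r : ℝ) * poArm pA + (s : ℝ) * poArm pB) / ((r + s : ℕ) : ℝ)
    - 2 * pCircD p r s (1 - pA) (1 - pB)

/-- `S = (q_A − q_B)²(1 + (−1)^{r+s} q_A^r q_B^s) /
      ((r+s)(1+q_A)²(1+q_B)²(1 − (q_A^r q_B^s)²))`. -/
noncomputable def Sval (qA qB : ℝ) (r s : ℕ) : ℝ :=
  (qA - qB) ^ 2 * (1 + (-1 : ℝ) ^ (r + s) * qA ^ r * qB ^ s) /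
    (((r + s : ℕ) : ℝ) * (1 + qA) ^ 2 * (1 + qB) ^ 2 * (1 - (qA ^ r * qB ^ s) ^ 2))

set_option maxHeartbeats 1000000

private lemma my_alt_sum (G : ℕ → ℝ) (N : ℕ) :
    ∑ k ∈ Icc 1 N, (G (2*k) - G (2*k+1))
      = ∑ m ∈ Icc 2 (2*N+1), (-1:ℝ)^m * G m := by
  induction N with
  | zero =>
    rw [show (2:ℕ)*0+1 = 1 from rfl, Finset.Icc_eq_empty (by omega),
      Finset.Icc_eq_empty (by omega)]
    simp
  | succ N ih =>
    have h1 : 2*(N+1)+1 = (2*N+1)+1+1 := by ring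
    have e3 : 2*(N+1) = 2*N+1+1 := by ring
    rw [Finset.sum_Icc_succ_top (by omega : 1 ≤ N+1), ih, h1,
      Finset.sum_Icc_succ_top (by omega : 2 ≤ 2*N+1+1+1),
      Finset.sum_Icc_succ_top (by omega : 2 ≤ 2*N+1+1), e3]
    have e1 : (-1:ℝ)^(2*N+1+1) = 1 := Even.neg_one_pow ⟨N+1, by omega⟩
    have e2 : (-1:ℝ)^(2*N+1+1+1) = -1 := Odd.neg_one_pow ⟨N+1, by omega⟩
    rw [e1, e2]; ring

private lemma my_blockVal (v : ℕ → ℝ) (C qc : ℝ) :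
    ∀ (len t : ℕ), (∀ j, t ≤ j → j < t + len → v j = C - qc * v (j+1)) →
      v t = C * (∑ i ∈ Finset.range len, (-qc)^i) + (-qc)^len * v (t+len) := by
  intro len
  induction len with
  | zero => intro t _; simp
  | succ L ih =>
    intro t h
    have h0 := h t (le_refl t) (by omega)
    have h1 := ih (t+1) (fun j hj1 hj2 => h j (by omega) (by omega))
    have e : t+1+L = t+(L+1) := by omega
    rw [e] at h1
    rw [h0, h1, geom_sum_succ, pow_succ]
    ring

private lemma my_blockSum (v : ℕ → ℝ) (C qc : ℝ) (t len : ℕ)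
    (h : ∀ j, t ≤ j → j < t + len → v j = C - qc * v (j+1)) :
    (1 + qc) * (∑ j ∈ Finset.Ico t (t+len), v j)
      = len * C + qc * (v t - v (t+len)) := by
  rcases Nat.eq_zero_or_pos len with h0 | hpos
  · subst h0; simp
  have h1 : ∑ j ∈ Ico t (t+len), v j = ∑ j ∈ Ico t (t+len), (C - qc * v (j+1)) :=
    Finset.sum_congr rfl (fun j hj => by
      rw [Finset.mem_Ico] at hj; exact h j hj.1 hj.2)
  have h2 : ∑ j ∈ Ico t (t+len), v (j+1) = ∑ j ∈ Ico (t+1) (t+len+1), v j := by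
    rw [Finset.sum_Ico_eq_sum_range, Finset.sum_Ico_eq_sum_range]
    have e1 : t+len-t = len := by omega
    have e2 : t+len+1-(t+1) = len := by omega
    rw [e1, e2]
    exact Finset.sum_congr rfl (fun i _ => by congr 1; omega)
  have h3 : ∑ j ∈ Ico (t+1) (t+len+1), v j
      = (∑ j ∈ Ico t (t+len), v j) - v t + v (t+len) := by
    rw [Finset.sum_Ico_succ_top (by omega : t+1 ≤ t+len),
      Finset.sum_eq_sum_Ico_succ_bot (by omega : t < t+len) v]
    ring
  have h4 : ∑ j ∈ Ico t (t+len), (C - qc * v (j+1))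
      = len * C - qc * ∑ j ∈ Ico t (t+len), v (j+1) := by
    rw [Finset.sum_sub_distrib, Finset.sum_const, ← Finset.mul_sum, Nat.card_Ico]
    have : t + len - t = len := by omega
    rw [this]; simp [mul_comm]
  have key : ∑ j ∈ Ico t (t+len), v j
      = len * C - qc * ((∑ j ∈ Ico t (t+len), v j) - v t + v (t+len)) := by
    calc ∑ j ∈ Ico t (t+len), v j
        = ∑ j ∈ Ico t (t+len), (C - qc * v (j+1)) := h1
      _ = len * C - qc * ∑ j ∈ Ico t (t+len), v (j+1) := h4
      _ = len * C - qc * ((∑ j ∈ Ico t (t+len), v j) - v t + v (t+len)) := by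
          rw [h2, h3]
  linear_combination key

private lemma my_shift_prod (f : ℕ → ℝ) (n : ℕ) (hf : ∀ i, f (i+n) = f i) (a b : ℕ) :
    ∏ i ∈ Icc (a+n) (b+n), f i = ∏ i ∈ Icc a b, f i := by
  have e1 : Icc (a+n) (b+n) = Icc (n+a) (n+b) := by rw [add_comm a n, add_comm b n]
  rw [e1, ← Finset.map_add_left_Icc, Finset.prod_map]
  exact Finset.prod_congr rfl (fun i _ => by
    simp only [addLeftEmbedding_apply]
    rw [add_comm n i, hf i])

private lemma my_rot_sum (F : ℕ → ℝ) (n : ℕ) (hF : F (n+1) = F 1) :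
    ∑ j ∈ Icc 1 n, F (j+1) = ∑ j ∈ Icc 1 n, F j := by
  rcases Nat.eq_zero_or_pos n with h0 | hpos
  · subst h0; simp
  have h1 : ∑ j ∈ Icc 1 n, F (j+1) = ∑ j ∈ Icc 2 (n+1), F j := by
    have : Icc 2 (n+1) = Icc (1+1) (1+n) := by rw [add_comm 1 n]
    rw [this, ← Finset.map_add_left_Icc, Finset.sum_map]
    exact Finset.sum_congr rfl (fun i _ => by
      simp only [addLeftEmbedding_apply]; rw [add_comm 1 i])
  rw [h1, Finset.sum_Icc_succ_top (by omega : 2 ≤ n+1), hF,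
    ← Finset.Ico_add_one_right_eq_Icc 1 n, Finset.sum_eq_sum_Ico_succ_bot (by omega : 1 < n+1) F,
    ← Finset.Ico_add_one_right_eq_Icc 2 n]
  ring

private lemma my_period_prod_const (q : ℕ → ℝ) (n : ℕ) (hq : ∀ i, q (i+n) = q i)
    (hne : ∀ i, 1 ≤ i → q i ≠ 0) :
    ∀ j, ∏ i ∈ Icc (j+1) (j+n), q i = ∏ i ∈ Icc 1 n, q i := by
  intro j
  induction j with
  | zero => simp
  | succ j ih =>
    rcases Nat.eq_zero_or_pos n with h0 | hpos
    · subst h0; simp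
    have key : ∏ i ∈ Icc (j+1) (j+n+1), q i
        = (∏ i ∈ Icc (j+1) (j+n), q i) * q (j+n+1) :=
      Finset.prod_Icc_succ_top (by omega) q
    have key2 : ∏ i ∈ Icc (j+1) (j+n+1), q i
        = q (j+1) * ∏ i ∈ Icc (j+2) (j+n+1), q i := by
      rw [← Finset.Ico_add_one_right_eq_Icc (j+1) (j+n+1),
        Finset.prod_eq_prod_Ico_succ_bot (by omega : j+1 < j+n+1+1) q,
        Finset.Ico_add_one_right_eq_Icc (j+2) (j+n+1)]
    have hqp : q (j+n+1) = q (j+1) := by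
      have := hq (j+1); rw [← this]; congr 1; omega
    have e1 : j+1+1 = j+2 := rfl
    have e2 : j+1+n = j+n+1 := by omega
    rw [e1, e2]
    have goal_eq : ∏ i ∈ Icc (j+2) (j+n+1), q i = ∏ i ∈ Icc (j+1) (j+n), q i := by
      apply mul_left_cancel₀ (hne (j+1) (by omega))
      rw [← key2, key, hqp, mul_comm]
    rw [goal_eq, ih]

private lemma my_prod_add_period (q : ℕ → ℝ) (n : ℕ) (hq : ∀ i, q (i+n) = q i)
    (hne : ∀ i, 1 ≤ i → q i ≠ 0) (j m : ℕ) :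
    ∏ i ∈ Icc (j+1) (j+(m+n)), q i
      = (∏ i ∈ Icc (j+1) (j+m), q i) * ∏ i ∈ Icc 1 n, q i := by
  have e1 : j+(m+n) = (j+m)+n := by omega
  rw [e1, ← Finset.Ico_add_one_right_eq_Icc (j+1) (j+m+n),
    ← Finset.prod_Ico_consecutive q (by omega : j+1 ≤ j+m+1) (by omega : j+m+1 ≤ j+m+n+1),
    Finset.Ico_add_one_right_eq_Icc]
  have e2 : Ico (j+m+1) (j+m+n+1) = Icc ((j+m)+1) ((j+m)+n) := by
    rw [← Finset.Ico_add_one_right_eq_Icc]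
  rw [e2, my_period_prod_const q n hq hne (j+m)]

private lemma my_half_split (G : ℕ → ℝ) (n : ℕ) (Qc : ℝ) (hG : ∀ m, G (m+n) = Qc * G m) :
    ∑ m ∈ Icc 2 (2*n+1), (-1:ℝ)^m * G m
      = (1 + (-1:ℝ)^n * Qc) * ∑ m ∈ Icc 2 (n+1), (-1:ℝ)^m * G m := by
  rcases Nat.eq_zero_or_pos n with h0 | hpos
  · subst h0
    rw [show (2:ℕ)*0+1 = 1 from rfl, Finset.Icc_eq_empty (by omega : ¬ (2:ℕ) ≤ 1)]
    simp
  have e0 : (2:ℕ)*n+1+1 = (n+2)+n := by omega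
  rw [← Finset.Ico_add_one_right_eq_Icc 2 (2*n+1), e0]
  rw [← Finset.sum_Ico_consecutive (fun m => (-1:ℝ)^m * G m)
    (by omega : 2 ≤ n+2) (by omega : n+2 ≤ (n+2)+n)]
  have h2 : ∑ m ∈ Ico (n+2) (n+2+n), (-1:ℝ)^m * G m
      = (-1:ℝ)^n * Qc * ∑ m ∈ Ico 2 (n+2), (-1:ℝ)^m * G m := by
    rw [Finset.mul_sum]
    rw [Finset.sum_Ico_eq_sum_range, Finset.sum_Ico_eq_sum_range]
    have e1 : n+2+n-(n+2) = n := by omega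
    have e2 : n+2-2 = n := by omega
    rw [e1, e2]
    apply Finset.sum_congr rfl
    intro i _
    have e3 : n+2+i = (2+i)+n := by omega
    rw [e3, hG (2+i), pow_add]
    ring
  rw [h2, show n+2 = n+1+1 from rfl, Finset.Ico_add_one_right_eq_Icc 2 (n+1)]
  ring

private lemma my_final (qA qB A B R S : ℝ)
    (h1 : 1 + qA ≠ 0) (h2 : 1 + qB ≠ 0) (h3 : R + S ≠ 0)
    (h4 : 1 - A*B ≠ 0) (h5 : 1 + A*B ≠ 0) (h6 : 1 - (A*B)^2 ≠ 0) :
    2 * (R * (qA ^ 2 / (1 + qA)) + S * (qB ^ 2 / (1 + qB))) / (R + S) -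
      2 *
        (1 / (R + S) *
          ((1 + A * B) *
              ((R * (1 - A * B) +
                          qA *
                            ((A - 1) / (-qA - 1) + A * ((B - 1) / (-qB - 1)) -
                              ((B - 1) / (-qB - 1) + B * ((A - 1) / (-qA - 1))))) /
                        (1 + qA) +
                      (S * (1 - A * B) +
                          qB *
                            ((B - 1) / (-qB - 1) + B * ((A - 1) / (-qA - 1)) -
                              ((A - 1) / (-qA - 1) + A * ((B - 1) / (-qB - 1))))) /
                        (1 + qB) -
                    (R + S) +
                  (R * qA + S * qB) +
                A * B * (R + S - (R * qA + S * qB))) /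
            (1 - (A * B) ^ 2))) =
    2 * ((1 - A) * (1 - B)) *
      ((qA - qB) ^ 2 * (1 + A * B) / ((R + S) * (1 + qA) ^ 2 * (1 + qB) ^ 2 * (1 - (A * B) ^ 2))) := by
  have h7 : -qA - 1 ≠ 0 := fun hc => h1 (by linarith [hc])
  have h8 : -qB - 1 ≠ 0 := fun hc => h2 (by linarith [hc])
  have e1 : (A - 1) / (-qA - 1) + A * ((B - 1) / (-qB - 1)) -
        ((B - 1) / (-qB - 1) + B * ((A - 1) / (-qA - 1)))
      = (1-A)*(1-B)*(qB - qA)/((1+qA)*(1+qB)) := by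
    field_simp
    ring
  have e2 : (B - 1) / (-qB - 1) + B * ((A - 1) / (-qA - 1)) -
        ((A - 1) / (-qA - 1) + A * ((B - 1) / (-qB - 1)))
      = (1-A)*(1-B)*(qA - qB)/((1+qA)*(1+qB)) := by
    field_simp
    ring
  rw [e1, e2]
  have hred : ∀ X : ℝ, (1 + A*B) * X / (1 - (A*B)^2) = X / (1 - A*B) := by
    intro X
    rw [div_eq_div_iff h6 h4]
    ring
  rw [hred]
  have hD1 : (R + S) * (1 + qA)^2 * (1 + qB)^2 * (1 - (A*B)^2) ≠ 0 := by
    exact mul_ne_zero (mul_ne_zero (mul_ne_zero h3 (pow_ne_zero 2 h1)) (pow_ne_zero 2 h2)) h6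
  have hD2 : (R + S) * (1 + qA)^2 * (1 + qB)^2 * (1 - A*B) ≠ 0 := by
    exact mul_ne_zero (mul_ne_zero (mul_ne_zero h3 (pow_ne_zero 2 h1)) (pow_ne_zero 2 h2)) h4
  have e4 : (qA - qB)^2 * (1 + A*B) / ((R+S)*(1+qA)^2*(1+qB)^2*(1 - (A*B)^2))
      = (qA - qB)^2 / ((R+S)*(1+qA)^2*(1+qB)^2*(1 - A*B)) := by
    rw [div_eq_div_iff hD1 hD2]
    ring
  rw [e4]
  field_simp
  ring

/-- Lemma 4: for the strategy `D = A^r B^s`, `R_D = 2 Q_1 S` where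
`Q_1 = (1 − (−1)^r q_A^r)(1 − (−1)^s q_B^s)`. -/
theorem lemma4_RD_simple_strategy
    (pA pB qA qB : ℝ) (hpA : pA ∈ Set.Ioo (0 : ℝ) 1) (hpB : pB ∈ Set.Ioo (0 : ℝ) 1)
    (hqA : qA = 1 - pA) (hqB : qB = 1 - pB)
    (r s : ℕ) (hr : 1 ≤ r) (hs : 1 ≤ s)
    (p : ℕ → ℝ)
    (hper : ∀ i, p (i + (r + s)) = p i)
    (hA : ∀ i, 1 ≤ i → i ≤ r → p i = pA)
    (hB : ∀ i, r + 1 ≤ i → i ≤ r + s → p i = pB) :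
    RD p r s pA pB
      = 2 * ((1 - (-1 : ℝ) ^ r * qA ^ r) * (1 - (-1 : ℝ) ^ s * qB ^ s)) * Sval qA qB r s := by
  obtain ⟨hpA0, hpA1⟩ := hpA
  obtain ⟨hpB0, hpB1⟩ := hpB
  have hqA0 : 0 < qA := by rw [hqA]; linarith
  have hqA1 : qA < 1 := by rw [hqA]; linarith
  have hqB0 : 0 < qB := by rw [hqB]; linarith
  have hqB1 : qB < 1 := by rw [hqB]; linarith
  set n := r + s with hn
  have hn2 : 2 ≤ n := by omega
  set q : ℕ → ℝ := fun i => 1 - p i with hqdef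
  have hq_per : ∀ i, q (i + n) = q i := fun i => by simp only [hqdef]; rw [hper]
  have hq_A : ∀ i, 1 ≤ i → i ≤ r → q i = qA := fun i h1 h2 => by
    simp only [hqdef]; rw [hA i h1 h2, hqA]
  have hq_B : ∀ i, r + 1 ≤ i → i ≤ n → q i = qB := fun i h1 h2 => by
    simp only [hqdef]; rw [hB i h1 (by omega), hqB]
  have hq_vals : ∀ i, 1 ≤ i → q i = qA ∨ q i = qB := by
    intro i
    induction i using Nat.strong_induction_on with
    | _ i ih =>
      intro h1
      by_cases hle : i ≤ n
      · by_cases hil : i ≤ r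
        · exact Or.inl (hq_A i h1 hil)
        · exact Or.inr (hq_B i (by omega) hle)
      · have e : i = (i - n) + n := by omega
        rw [e, hq_per]
        exact ih (i - n) (by omega) (by omega)
  have hq_ne : ∀ i, 1 ≤ i → q i ≠ 0 := by
    intro i h1
    rcases hq_vals i h1 with h | h
    · rw [h]; exact ne_of_gt hqA0
    · rw [h]; exact ne_of_gt hqB0
  set Q := qA ^ r * qB ^ s with hQdef
  have hQ0 : 0 < Q := by rw [hQdef]; positivity
  have hQ1 : Q < 1 := by
    have h1 : qA ^ r < 1 := pow_lt_one₀ (le_of_lt hqA0) hqA1 (by omega)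
    have h2 : qB ^ s < 1 := pow_lt_one₀ (le_of_lt hqB0) hqB1 (by omega)
    have h3 : (0:ℝ) < qA ^ r := pow_pos hqA0 r
    have h4 : (0:ℝ) < qB ^ s := pow_pos hqB0 s
    rw [hQdef]; nlinarith
  have hQbase : ∏ i ∈ Icc 1 n, q i = Q := by
    rw [← Finset.Ico_add_one_right_eq_Icc 1 n,
      ← Finset.prod_Ico_consecutive q (by omega : 1 ≤ r+1) (by omega : r+1 ≤ n+1)]
    have hA' : ∏ i ∈ Ico 1 (r+1), q i = qA ^ r := by
      have hmem : ∀ i ∈ Ico 1 (r+1), q i = qA := fun i hi => by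
        rw [Finset.mem_Ico] at hi; exact hq_A i hi.1 (by omega)
      rw [Finset.prod_congr rfl hmem, Finset.prod_const, Nat.card_Ico]
      have e : r + 1 - 1 = r := by omega
      rw [e]
    have hB' : ∏ i ∈ Ico (r+1) (n+1), q i = qB ^ s := by
      have hmem : ∀ i ∈ Ico (r+1) (n+1), q i = qB := fun i hi => by
        rw [Finset.mem_Ico] at hi; exact hq_B i hi.1 (by omega)
      rw [Finset.prod_congr rfl hmem, Finset.prod_const, Nat.card_Ico]
      have e : n + 1 - (r + 1) = s := by omega
      rw [e]
    rw [hA', hB', hQdef]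
  set P : ℕ → ℕ → ℝ := fun j m => ∏ i ∈ Icc (j+1) (j+m), q i with hPdef
  have hP_full : ∀ j, P j n = Q := fun j => by
    simp only [hPdef]; rw [my_period_prod_const q n hq_per hq_ne j, hQbase]
  have hP_per : ∀ j m, P (j+n) m = P j m := by
    intro j m
    simp only [hPdef]
    have e1 : j+n+1 = (j+1)+n := by omega
    have e2 : j+n+m = (j+m)+n := by omega
    rw [e1, e2, my_shift_prod q n hq_per]
  have hP_add : ∀ m j, P j (m+n) = P j m * Q := by
    intro m j
    simp only [hPdef]
    rw [my_prod_add_period q n hq_per hq_ne j m, hQbase]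
  have hP0 : ∀ j, P j 0 = 1 := fun j => by
    simp only [hPdef]
    rw [Finset.Icc_eq_empty (by omega), Finset.prod_empty]
  have hP_step : ∀ j m, P j (m+1) = q (j+1) * P (j+1) m := by
    intro j m
    simp only [hPdef]
    have e : j+(m+1) = j+1+m := by omega
    rw [e, ← Finset.Ico_add_one_right_eq_Icc (j+1) (j+1+m),
      Finset.prod_eq_prod_Ico_succ_bot (by omega) q, Finset.Ico_add_one_right_eq_Icc]
  set g : ℕ → ℝ := fun m => ∑ j ∈ Icc 1 n, P j m with hgdef
  have hg_per : ∀ m, g (m+n) = Q * g m := by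
    intro m
    simp only [hgdef]
    rw [Finset.mul_sum]
    exact Finset.sum_congr rfl fun j _ => by rw [hP_add m j]; ring
  have hg0 : g 0 = (n:ℝ) := by
    simp only [hgdef]
    rw [Finset.sum_congr rfl fun j _ => hP0 j, Finset.sum_const, Nat.card_Icc]
    simp
  have hq_sum : ∑ j ∈ Icc 1 n, q j = (r:ℝ) * qA + (s:ℝ) * qB := by
    rw [← Finset.Ico_add_one_right_eq_Icc 1 n,
      ← Finset.sum_Ico_consecutive q (by omega : 1 ≤ r+1) (by omega : r+1 ≤ n+1)]
    have hA' : ∑ i ∈ Ico 1 (r+1), q i = (r:ℝ) * qA := by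
      have hmem : ∀ i ∈ Ico 1 (r+1), q i = qA := fun i hi => by
        rw [Finset.mem_Ico] at hi; exact hq_A i hi.1 (by omega)
      rw [Finset.sum_congr rfl hmem, Finset.sum_const, Nat.card_Ico, nsmul_eq_mul]
      have e : r + 1 - 1 = r := by omega
      rw [e]
    have hB' : ∑ i ∈ Ico (r+1) (n+1), q i = (s:ℝ) * qB := by
      have hmem : ∀ i ∈ Ico (r+1) (n+1), q i = qB := fun i hi => by
        rw [Finset.mem_Ico] at hi; exact hq_B i hi.1 (by omega)
      rw [Finset.sum_congr rfl hmem, Finset.sum_const, Nat.card_Ico, nsmul_eq_mul]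
      have e : n + 1 - (r + 1) = s := by omega
      rw [e]
    rw [hA', hB']
  have hg1 : g 1 = (r:ℝ) * qA + (s:ℝ) * qB := by
    simp only [hgdef]
    have h1 : ∀ j, P j 1 = q (j+1) := fun j => by
      simp only [hPdef]; rw [Finset.Icc_self, Finset.prod_singleton]
    rw [Finset.sum_congr rfl fun j _ => h1 j,
      my_rot_sum q n (by rw [show n+1 = 1+n from by omega, hq_per 1]), hq_sum]
  have hf : ∀ m, (∑ j ∈ Icc 1 n, p j * P j m) = g m - g (m+1) := by
    intro m
    have hFper : (fun j => ∏ i ∈ Icc j (j+m), q i) (n+1)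
        = (fun j => ∏ i ∈ Icc j (j+m), q i) 1 := by
      simp only []
      rw [show n+1 = 1+n from by omega, show 1+n+m = (1+m)+n from by omega,
        my_shift_prod q n hq_per 1 (1+m)]
    have key : ∑ j ∈ Icc 1 n, q j * P j m = g (m+1) := by
      have hF1 : ∀ j, q j * P j m = ∏ i ∈ Icc j (j+m), q i := by
        intro j
        simp only [hPdef]
        rw [← Finset.Ico_add_one_right_eq_Icc j (j+m),
          Finset.prod_eq_prod_Ico_succ_bot (by omega) q, Finset.Ico_add_one_right_eq_Icc]
      have hF2 : ∀ j, ∏ i ∈ Icc (j+1) ((j+1)+m), q i = P j (m+1) := fun j => by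
        simp only [hPdef]; rw [show (j+1)+m = j+(m+1) from by omega]
      calc ∑ j ∈ Icc 1 n, q j * P j m
          = ∑ j ∈ Icc 1 n, ∏ i ∈ Icc j (j+m), q i :=
            Finset.sum_congr rfl fun j _ => hF1 j
        _ = ∑ j ∈ Icc 1 n, ∏ i ∈ Icc (j+1) ((j+1)+m), q i :=
            (my_rot_sum (fun j => ∏ i ∈ Icc j (j+m), q i) n hFper).symm
        _ = ∑ j ∈ Icc 1 n, P j (m+1) := Finset.sum_congr rfl fun j _ => hF2 j
        _ = g (m+1) := by simp only [hgdef]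
    have hsplit : ∀ j ∈ Icc 1 n, p j * P j m = P j m - q j * P j m := by
      intro j _
      have hpj : p j = 1 - q j := by simp only [hqdef]; ring
      rw [hpj]; ring
    rw [Finset.sum_congr rfl hsplit, Finset.sum_sub_distrib, key]
    try simp only [hgdef]
  set w : ℕ → ℝ := fun j => ∑ m ∈ range n, (-1:ℝ)^m * P j m with hwdef
  have hw_per0 : w n = w 0 := by
    have h1 : w (0+n) = w 0 := by
      simp only [hwdef]
      exact Finset.sum_congr rfl fun m _ => by rw [hP_per 0 m]
    rwa [Nat.zero_add] at h1
  set C := 1 - (-1:ℝ)^n * Q with hCdef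
  have hw_rec : ∀ j, w j = C - q (j+1) * w (j+1) := by
    intro j
    obtain ⟨n1, hn1⟩ : ∃ n1, n = n1 + 1 := ⟨n-1, by omega⟩
    have hwj : w j = ∑ m ∈ range n1, (-1:ℝ)^(m+1) * P j (m+1) + (-1:ℝ)^0 * P j 0 := by
      simp only [hwdef]; rw [hn1, Finset.sum_range_succ' (fun m => (-1:ℝ)^m * P j m) n1]
    have hwj1 : w (j+1) = ∑ m ∈ range n1, (-1:ℝ)^m * P (j+1) m + (-1:ℝ)^n1 * P (j+1) n1 := by
      simp only [hwdef]; rw [hn1, Finset.sum_range_succ]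
    have hS0 : ∑ m ∈ range n1, (-1:ℝ)^m * P (j+1) m
        = w (j+1) - (-1:ℝ)^n1 * P (j+1) n1 := by rw [hwj1]; ring
    have hsum : ∑ m ∈ range n1, (-1:ℝ)^(m+1) * P j (m+1)
        = -(q (j+1) * ∑ m ∈ range n1, (-1:ℝ)^m * P (j+1) m) := by
      rw [Finset.mul_sum, ← Finset.sum_neg_distrib]
      exact Finset.sum_congr rfl fun m _ => by rw [hP_step j m, pow_succ]; ring
    have hQn1 : q (j+1) * P (j+1) n1 = Q := by
      rw [← hP_step j n1, ← hn1]
      exact hP_full j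
    have hsgn : (-1:ℝ)^n1 = -(-1:ℝ)^n := by rw [hn1, pow_succ]; ring
    rw [hCdef, hwj, hP0 j, hsum, hS0, hsgn]
    linear_combination (-(-1:ℝ)^n) * hQn1
  have hrecA : ∀ j, 0 ≤ j → j < 0 + r → w j = C - qA * w (j+1) := by
    intro j _ hj
    rw [hw_rec j, hq_A (j+1) (by omega) (by omega)]
  have hrecB : ∀ j, r ≤ j → j < r + s → w j = C - qB * w (j+1) := by
    intro j hj1 hj2
    rw [hw_rec j, hq_B (j+1) (by omega) (by omega)]
  have hw0eq := my_blockVal w C qA r 0 hrecA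
  rw [Nat.zero_add] at hw0eq
  have hwreq := my_blockVal w C qB s r hrecB
  rw [← hn, hw_per0] at hwreq
  have hgeomA : ∑ i ∈ Finset.range r, (-qA)^i = ((-qA)^r - 1)/((-qA) - 1) :=
    geom_sum_eq (by intro hc; linarith) r
  have hgeomB : ∑ i ∈ Finset.range s, (-qB)^i = ((-qB)^s - 1)/((-qB) - 1) :=
    geom_sum_eq (by intro hc; linarith) s
  rw [hgeomA] at hw0eq
  rw [hgeomB] at hwreq
  have hab : (-qA)^r * (-qB)^s = (-1:ℝ)^n * Q := by
    rw [hQdef, hn, neg_pow, neg_pow, pow_add]; ring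
  have hEbound : -1 < (-1:ℝ)^n * Q ∧ (-1:ℝ)^n * Q < 1 := by
    rcases Nat.even_or_odd n with he | ho
    · rw [he.neg_one_pow]; constructor <;> linarith
    · rw [ho.neg_one_pow]; constructor <;> linarith
  have h1mab : (0:ℝ) < 1 - (-qA)^r * (-qB)^s := by rw [hab]; linarith [hEbound.2]
  have h1pab : (0:ℝ) < 1 + (-qA)^r * (-qB)^s := by rw [hab]; linarith [hEbound.1]
  have hab_ne : 1 - (-qA)^r * (-qB)^s ≠ 0 := ne_of_gt h1mab
  have h1qA_ne : (1:ℝ) + qA ≠ 0 := by positivity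
  have h1qB_ne : (1:ℝ) + qB ≠ 0 := by positivity
  have hSA := my_blockSum w C qA 0 r hrecA
  rw [Nat.zero_add] at hSA
  have hSB := my_blockSum w C qB r s hrecB
  rw [← hn, hw_per0] at hSB
  have hIA : ∑ j ∈ Ico 0 r, w j = ((r:ℝ)*C + qA*(w 0 - w r))/(1+qA) := by
    rw [eq_div_iff h1qA_ne]
    linear_combination hSA
  have hIB : ∑ j ∈ Ico r n, w j = ((s:ℝ)*C + qB*(w r - w 0))/(1+qB) := by
    rw [eq_div_iff h1qB_ne]
    linear_combination hSB
  have hWsum : ∑ j ∈ Icc 1 n, w j = ∑ j ∈ Ico 0 r, w j + ∑ j ∈ Ico r n, w j := by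
    rw [Finset.sum_Ico_consecutive w (by omega : 0 ≤ r) (by omega : r ≤ n),
      Finset.sum_eq_sum_Ico_succ_bot (by omega : 0 < n) w,
      ← Finset.Ico_add_one_right_eq_Icc 1 n, Finset.sum_Ico_succ_top (by omega : 1 ≤ n) w, hw_per0]
    ring
  have hU : ∑ m ∈ Icc 2 (n+1), (-1:ℝ)^m * g m
      = (∑ j ∈ Icc 1 n, w j) - g 0 + g 1 + ((-1:ℝ)^n * Q) * (g 0 - g 1) := by
    have hswap : ∑ m ∈ range n, (-1:ℝ)^m * g m = ∑ j ∈ Icc 1 n, w j := by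
      simp only [hgdef, hwdef, Finset.mul_sum]
      exact Finset.sum_comm
    have hgn : g n = Q * g 0 := by have h := hg_per 0; rwa [Nat.zero_add] at h
    have hgn1 : g (n+1) = Q * g 1 := by
      have h := hg_per 1; rwa [show 1+n = n+1 from by omega] at h
    have hlhs : ∑ m ∈ Icc 2 (n+1), (-1:ℝ)^m * g m
        = (∑ m ∈ Ico 2 n, (-1:ℝ)^m * g m) + (-1:ℝ)^n * g n + (-1:ℝ)^(n+1) * g (n+1) := by
      rw [← Finset.Ico_add_one_right_eq_Icc 2 (n+1),
        Finset.sum_Ico_succ_top (by omega : 2 ≤ n+1) (fun m => (-1:ℝ)^m * g m),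
        Finset.sum_Ico_succ_top (by omega : 2 ≤ n) (fun m => (-1:ℝ)^m * g m)]
    have hrhs : ∑ m ∈ range n, (-1:ℝ)^m * g m
        = (-1:ℝ)^0 * g 0 + (-1:ℝ)^1 * g 1 + ∑ m ∈ Ico 2 n, (-1:ℝ)^m * g m := by
      rw [Finset.range_eq_Ico,
        Finset.sum_eq_sum_Ico_succ_bot (by omega : 0 < n) (fun m => (-1:ℝ)^m * g m),
        Finset.sum_eq_sum_Ico_succ_bot (by omega : 1 < n) (fun m => (-1:ℝ)^m * g m)]
      ring
    have hmid : ∑ m ∈ Ico 2 n, (-1:ℝ)^m * g m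
        = (∑ j ∈ Icc 1 n, w j) - (-1:ℝ)^0 * g 0 - (-1:ℝ)^1 * g 1 := by
      rw [← hswap, hrhs]; ring
    rw [hlhs, hgn, hgn1, hmid, pow_succ]
    simp only [pow_zero, pow_one]
    ring
  have hT : ∑ k ∈ Icc 1 n, (∑ j ∈ Icc 1 n, p j * ∏ i ∈ Icc (j+1) (j+2*k), (1 - p i))
      = (1 + (-1:ℝ)^n * Q) * ∑ m ∈ Icc 2 (n+1), (-1:ℝ)^m * g m := by
    have hinner : ∀ k, (∑ j ∈ Icc 1 n, p j * ∏ i ∈ Icc (j+1) (j+2*k), (1 - p i))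
        = g (2*k) - g (2*k+1) := by
      intro k
      calc ∑ j ∈ Icc 1 n, p j * ∏ i ∈ Icc (j+1) (j+2*k), (1 - p i)
          = ∑ j ∈ Icc 1 n, p j * P j (2*k) :=
            Finset.sum_congr rfl fun j _ => by simp only [hPdef, hqdef]
        _ = g (2*k) - g (2*k+1) := hf (2*k)
    calc ∑ k ∈ Icc 1 n, (∑ j ∈ Icc 1 n, p j * ∏ i ∈ Icc (j+1) (j+2*k), (1 - p i))
        = ∑ k ∈ Icc 1 n, (g (2*k) - g (2*k+1)) :=
          Finset.sum_congr rfl fun k _ => hinner k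
      _ = ∑ m ∈ Icc 2 (2*n+1), (-1:ℝ)^m * g m := my_alt_sum g n
      _ = (1 + (-1:ℝ)^n * Q) * ∑ m ∈ Icc 2 (n+1), (-1:ℝ)^m * g m :=
          my_half_split g n Q hg_per
  have hnR : ((n:ℕ):ℝ) ≠ 0 := Nat.cast_ne_zero.2 (by omega)
  have hQ2pos : (0:ℝ) < 1 - Q^2 := by nlinarith
  have hQ2ne : (1:ℝ) - Q^2 ≠ 0 := ne_of_gt hQ2pos
  have hpcirc : pCircD p r s qA qB
      = (1/((n:ℕ):ℝ)) * ((1 + (-1:ℝ)^n * Q)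
          * (∑ m ∈ Icc 2 (n+1), (-1:ℝ)^m * g m) / (1 - Q^2)) := by
    simp only [pCircD]
    rw [← hn, ← hQdef, ← Finset.sum_div, hT]
  have hpoA : poArm pA = qA^2/(1+qA) := by
    rw [poArm, show (1:ℝ) - pA = qA from hqA.symm, show pA = 1 - qA from by linarith]
    rw [show (1:ℝ) - qA^2 = (1-qA)*(1+qA) from by ring]
    have h1 : (1:ℝ) - qA ≠ 0 := by intro hc; nlinarith
    field_simp
  have hpoB : poArm pB = qB^2/(1+qB) := by
    rw [poArm, show (1:ℝ) - pB = qB from hqB.symm, show pB = 1 - qB from by linarith]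
    rw [show (1:ℝ) - qB^2 = (1-qB)*(1+qB) from by ring]
    have h1 : (1:ℝ) - qB ≠ 0 := by intro hc; nlinarith
    field_simp
  have hQ2eq : Q^2 = ((-qA)^r * (-qB)^s)^2 := by
    rw [hab]
    rcases Nat.even_or_odd n with he | ho
    · rw [he.neg_one_pow]; ring
    · rw [ho.neg_one_pow]; ring
  have hE2 : (-1:ℝ)^n * qA^r * qB^s = (-qA)^r * (-qB)^s := by
    rw [hab, hQdef]; ring
  have hncast : ((n:ℕ):ℝ) = (r:ℝ) + (s:ℝ) := by rw [hn]; push_cast; ring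
  have hrsne : (r:ℝ) + (s:ℝ) ≠ 0 := by
    have h1 : (1:ℝ) ≤ (r:ℝ) := by exact_mod_cast hr
    have h2 : (0:ℝ) ≤ (s:ℝ) := Nat.cast_nonneg s
    linarith
  have hmqA : (-qA) - 1 ≠ 0 := by intro hc; linarith
  have hmqB : (-qB) - 1 ≠ 0 := by intro hc; linarith
  -- assemble
  rw [RD, hpoA, hpoB, show (1:ℝ) - pA = qA from hqA.symm, show (1:ℝ) - pB = qB from hqB.symm,
    hpcirc, hU, hWsum, hIA, hIB, hg0, hg1, Sval]
  rw [← hn, show ((-1:ℝ))^n * qA^r * qB^s = (-qA)^r * (-qB)^s from hE2, ← hQdef, hQ2eq]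
  rw [show ((-1:ℝ))^r * qA^r = (-qA)^r from (neg_pow qA r).symm,
    show ((-1:ℝ))^s * qB^s = (-qB)^s from (neg_pow qB s).symm]
  rw [hncast]
  obtain ⟨A, hAe⟩ : ∃ A, (-qA)^r = A := ⟨_, rfl⟩
  obtain ⟨B, hBe⟩ : ∃ B, (-qB)^s = B := ⟨_, rfl⟩
  obtain ⟨R, hRe⟩ : ∃ R : ℝ, ((r:ℕ):ℝ) = R := ⟨_, rfl⟩
  obtain ⟨S, hSe⟩ : ∃ S : ℝ, ((s:ℕ):ℝ) = S := ⟨_, rfl⟩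
  rw [hAe, hBe] at h1mab h1pab hab_ne hab ⊢
  rw [hAe] at hw0eq
  rw [hBe] at hwreq
  rw [hRe, hSe] at hrsne ⊢
  have hCab : C = 1 - A * B := by rw [hCdef, ← hab]
  rw [← hab, hCab]
  have hpab_ne : 1 + A * B ≠ 0 := ne_of_gt h1pab
  have hsq_ne : 1 - (A * B)^2 ≠ 0 := by
    have he : (1:ℝ) - (A*B)^2 = (1 - A*B) * (1 + A*B) := by ring
    rw [he]; exact mul_ne_zero hab_ne hpab_ne
  have hw0v : w 0 = (A - 1)/(-qA - 1) + A * ((B - 1)/(-qB - 1)) := by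
    apply mul_right_cancel₀ hab_ne
    linear_combination hw0eq + A * hwreq
      + ((A - 1)/(-qA - 1) + A * ((B - 1)/(-qB - 1))) * hCab
  have hwrv : w r = (B - 1)/(-qB - 1) + B * ((A - 1)/(-qA - 1)) := by
    apply mul_right_cancel₀ hab_ne
    linear_combination hwreq + B * hw0eq
      + ((B - 1)/(-qB - 1) + B * ((A - 1)/(-qA - 1))) * hCab
  rw [hw0v, hwrv]
  exact my_final qA qB A B R S h1qA_ne h1qB_ne hrsne hab_ne hpab_ne hsq_ne
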